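/- With the setup of the perpendicular-circles construction (p_j for 0 ≤ j ≤ m−1 on the unit circle in the xy-plane and q_k for 0 ≤ k ≤ n−1 on the circle in the xz-plane, with squared distance |p_j q_k|² = 2b²β^(j+k) + 1 + r² − a² and 0 < β < 1), the number of distinct distances spanned by pairs (p_j, q_k) is exactly m + n − 1. -/

import Mathlib

open scoped Classical

noncomputable def pt (x y z : ℝ) : EuclideanSpace ℝ (Fin 3) := !₂[x, y, z]

/-- The point `p_j` on the unit circle in the `xy`-plane. -/
noncomputable def pPt (a b β : ℝ) (j : ℕ) : EuclideanSpace ℝ (Fin 3) :=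
  pt (b * β ^ j - a) (Real.sqrt (1 - (b * β ^ j - a) ^ 2)) 0

/-- The point `q_k` on the circle of radius `r` centered at `(−a,0,0)` in the `xz`-plane. -/
noncomputable def qPt (a r b β : ℝ) (k : ℕ) : EuclideanSpace ℝ (Fin 3) :=
  pt (-(b * β ^ k)) 0 (r * Real.sqrt (1 - ((a - b * β ^ k) / r) ^ 2))

/-- In the perpendicular-circles construction, the number of distinct distances
spanned by the pairs `(p_j, q_k)` for `0 ≤ j ≤ m−1`, `0 ≤ k ≤ n−1` is exactly `m + n − 1`. -/
theorem perpendicular_circles_distinct_distances (a r b β : ℝ) (m n : ℕ)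
    (ha : 0 < a) (hr : 0 < r) (hmn : m ≤ n) (hm : 1 ≤ m)
    (hb : b ∈ Set.Ioo a (a + min 1 r))
    (hβ : β ∈ Set.Ioo ((a / b) ^ ((1 : ℝ) / n)) 1) :
    (((Finset.range m) ×ˢ (Finset.range n)).image
        (fun jk => dist (pPt a b β jk.1) (qPt a r b β jk.2))).card = m + n - 1 := by
  obtain ⟨hab, hbu⟩ := hb
  obtain ⟨hβl, hβ1⟩ := hβ
  have hb0 : 0 < b := lt_trans ha hab
  have hn1 : 1 ≤ n := le_trans hm hmn
  have hβ0 : 0 < β := lt_of_le_of_lt (Real.rpow_nonneg (by positivity) _) hβl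
  -- β^n > a/b
  have hβn : a / b < β ^ n := by
    have h1 : ((a / b) ^ ((1:ℝ)/n)) ^ n < β ^ n := by
      apply pow_lt_pow_left₀ hβl (Real.rpow_nonneg (by positivity) _)
      omega
    have h2 : ((a / b) ^ ((1:ℝ)/n)) ^ n = a / b := by
      rw [← Real.rpow_natCast ((a/b) ^ ((1:ℝ)/n)) n, ← Real.rpow_mul (by positivity)]
      have : (1:ℝ)/n * n = 1 := by
        field_simp
      rw [this, Real.rpow_one]
    rwa [h2] at h1
  -- for j ≤ n : a < b β^j < a + min 1 r
  have hkey : ∀ j : ℕ, j ≤ n → a < b * β ^ j ∧ b * β ^ j < a + min 1 r := by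
    intro j hj
    constructor
    · have : β ^ n ≤ β ^ j := pow_le_pow_of_le_one hβ0.le hβ1.le hj
      have := lt_of_lt_of_le hβn this
      calc a = b * (a / b) := by field_simp
        _ < b * β ^ j := by exact mul_lt_mul_of_pos_left this hb0
    · have h1 : b * β ^ j ≤ b * 1 := by
        apply mul_le_mul_of_nonneg_left _ hb0.le
        exact pow_le_one₀ hβ0.le hβ1.le
      calc b * β ^ j ≤ b := by linarith
        _ < a + min 1 r := hbu
  set c : ℝ := 1 + r ^ 2 - a ^ 2 with hc
  set g : ℕ → ℝ := fun s => Real.sqrt (2 * b ^ 2 * β ^ s + c) with hg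
  -- positivity of argument for s ≤ 2n
  have hpos : ∀ s : ℕ, s ≤ 2 * n → 0 < 2 * b ^ 2 * β ^ s + c := by
    intro s hs
    have h1 : β ^ (2 * n) ≤ β ^ s := pow_le_pow_of_le_one hβ0.le hβ1.le hs
    have h2 : (a / b) ^ 2 < β ^ (2 * n) := by
      rw [two_mul, pow_add]
      have hab0 : 0 < a / b := by positivity
      calc (a/b)^2 = (a/b) * (a/b) := sq (a/b) ▸ rfl
        _ < β ^ n * β ^ n := by
            apply mul_lt_mul' hβn.le hβn hab0.le (by positivity)
    have h3 : a ^ 2 < b ^ 2 * β ^ s := by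
      have := lt_of_lt_of_le h2 h1
      have h4 : b ^ 2 * (a / b) ^ 2 < b ^ 2 * β ^ s := by
        exact mul_lt_mul_of_pos_left this (by positivity)
      have h5 : b ^ 2 * (a / b) ^ 2 = a ^ 2 := by
        field_simp
      linarith
    have : 0 ≤ β ^ s := by positivity
    nlinarith [sq_nonneg r]
  -- the distance formula
  have hdist : ∀ j k : ℕ, j ≤ n → k ≤ n →
      dist (pPt a b β j) (qPt a r b β k) = g (j + k) := by
    intro j k hj hk
    obtain ⟨hj1, hj2⟩ := hkey j hj
    obtain ⟨hk1, hk2⟩ := hkey k hk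
    have hj3 : b * β ^ j - a < 1 := by
      have := min_le_left (1:ℝ) r; linarith
    have hk3 : b * β ^ k - a < r := by
      have := min_le_right (1:ℝ) r; linarith
    have hjs : (0:ℝ) ≤ 1 - (b * β ^ j - a) ^ 2 := by nlinarith
    have hks : (0:ℝ) ≤ 1 - ((a - b * β ^ k) / r) ^ 2 := by
      have : ((a - b * β ^ k) / r) ^ 2 = (b * β ^ k - a) ^ 2 / r ^ 2 := by
        rw [div_pow]; ring_nf
      rw [this]
      rw [sub_nonneg, div_le_one (by positivity)]
      nlinarith
    rw [EuclideanSpace.dist_eq]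
    simp only [pPt, qPt, pt, PiLp.toLp_apply, Matrix.cons_val_zero, Matrix.cons_val_one, Matrix.head_cons,
      Fin.sum_univ_three, Matrix.cons_val_two, Matrix.tail_cons, Real.dist_eq, sq_abs]
    have e1 : (Real.sqrt (1 - (b * β ^ j - a) ^ 2) - 0) ^ 2 = 1 - (b * β ^ j - a) ^ 2 := by
      rw [sub_zero, Real.sq_sqrt hjs]
    have e2 : (0 - r * Real.sqrt (1 - ((a - b * β ^ k) / r) ^ 2)) ^ 2
        = r ^ 2 * (1 - ((a - b * β ^ k) / r) ^ 2) := by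
      rw [zero_sub, neg_sq, mul_pow, Real.sq_sqrt hks]
    rw [e1, e2, hg]
    congr 1
    have e3 : r ^ 2 * ((a - b * β ^ k) / r) ^ 2 = (a - b * β ^ k) ^ 2 := by
      field_simp
    have e4 : β ^ (j + k) = β ^ j * β ^ k := pow_add β j k
    rw [e4, hc]
    linear_combination -e3
  -- rewrite the image
  have himg : ((Finset.range m) ×ˢ (Finset.range n)).image
      (fun jk => dist (pPt a b β jk.1) (qPt a r b β jk.2))
      = (Finset.range (m + n - 1)).image g := by
    have step1 : ((Finset.range m) ×ˢ (Finset.range n)).image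
        (fun jk => dist (pPt a b β jk.1) (qPt a r b β jk.2))
        = ((Finset.range m) ×ˢ (Finset.range n)).image (fun jk => g (jk.1 + jk.2)) := by
      apply Finset.image_congr
      intro jk hjk
      simp only [Finset.mem_coe, Finset.mem_product, Finset.mem_range] at hjk
      exact hdist jk.1 jk.2 (by omega) (by omega)
    rw [step1]
    have step2 : ((Finset.range m) ×ˢ (Finset.range n)).image (fun jk => jk.1 + jk.2)
        = Finset.range (m + n - 1) := by
      ext s
      simp only [Finset.mem_image, Finset.mem_product, Finset.mem_range]
      constructor
      · rintro ⟨⟨j, k⟩, ⟨hj, hk⟩, rfl⟩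
        omega
      · intro hs
        refine ⟨(min s (m - 1), s - min s (m - 1)), ⟨by omega, by omega⟩, by omega⟩
    rw [← step2, Finset.image_image]
    rfl
  rw [himg]
  rw [Finset.card_image_of_injOn, Finset.card_range]
  intro s hs t ht hst
  simp only [Finset.coe_range, Set.mem_Iio] at hs ht
  rcases lt_trichotomy s t with h | h | h
  · exfalso
    have hβst : β ^ t < β ^ s := pow_lt_pow_right_of_lt_one₀ hβ0 hβ1 h
    have h1 : 2 * b ^ 2 * β ^ t + c < 2 * b ^ 2 * β ^ s + c := by
      have := mul_lt_mul_of_pos_left hβst (show (0:ℝ) < 2 * b ^ 2 by positivity)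
      linarith
    have h2 : 0 < 2 * b ^ 2 * β ^ t + c := hpos t (by omega)
    have := Real.sqrt_lt_sqrt h2.le h1
    rw [hg] at hst
    simp only at hst
    linarith
  · exact h
  · exfalso
    have hβst : β ^ s < β ^ t := pow_lt_pow_right_of_lt_one₀ hβ0 hβ1 h
    have h1 : 2 * b ^ 2 * β ^ s + c < 2 * b ^ 2 * β ^ t + c := by
      have := mul_lt_mul_of_pos_left hβst (show (0:ℝ) < 2 * b ^ 2 by positivity)
      linarith
    have h2 : 0 < 2 * b ^ 2 * β ^ s + c := hpos s (by omega)
    have := Real.sqrt_lt_sqrt h2.le h1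
    rw [hg] at hst
    simp only at hst
    linarith
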